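/- If there exists A^∃ ∈ 𝐀^∃ such that both A̲^∀ + A^∃ and Ā^∀ + A^∃ are inverse nonnegative, then for every A^∀ ∈ 𝐀^∀ the matrix A^∀ + A^∃ is inverse nonnegative; in particular 𝐀 = 𝐀^∀ + 𝐀^∃ is AE inverse nonnegative (with a single uniform existential choice). -/

import Mathlib

open Finset

/-- `A` is inverse nonnegative: invertible with entrywise nonnegative inverse. -/
def InvNonneg {n : ℕ} (A : Matrix (Fin n) (Fin n) ℝ) : Prop :=
  IsUnit A.det ∧ ∀ i j, 0 ≤ A⁻¹ i j

namespace KuttlerAux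

variable {n : ℕ}

lemma mul_entry_nonneg {A B : Matrix (Fin n) (Fin n) ℝ}
    (hA : ∀ i j, 0 ≤ A i j) (hB : ∀ i j, 0 ≤ B i j) : ∀ i j, 0 ≤ (A * B) i j := by
  intro i j
  rw [Matrix.mul_apply]
  exact Finset.sum_nonneg fun k _ => mul_nonneg (hA i k) (hB k j)

lemma pow_entry_nonneg {A : Matrix (Fin n) (Fin n) ℝ} (hA : ∀ i j, 0 ≤ A i j) :
    ∀ k : ℕ, ∀ i j, 0 ≤ (A ^ k) i j := by
  intro k
  induction k with
  | zero =>
      intro i j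
      simp only [pow_zero]
      rcases eq_or_ne i j with h | h <;> simp [Matrix.one_apply, h]
  | succ m ih =>
      rw [pow_succ]
      exact mul_entry_nonneg ih hA

lemma pow_entry_le {P Q : Matrix (Fin n) (Fin n) ℝ}
    (hP0 : ∀ i j, 0 ≤ P i j) (hPQ : ∀ i j, P i j ≤ Q i j) :
    ∀ k : ℕ, ∀ i j, (P ^ k) i j ≤ (Q ^ k) i j := by
  intro k
  induction k with
  | zero => intro i j; simp
  | succ m ih =>
      intro i j
      rw [pow_succ, pow_succ, Matrix.mul_apply, Matrix.mul_apply]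
      refine Finset.sum_le_sum fun x _ => ?_
      exact mul_le_mul (ih i x) (hPQ x j) (hP0 x j)
        (le_trans (pow_entry_nonneg hP0 m i x) (ih i x))

/-- Key M-matrix lemma: if `0 ≤ P ≤ Q` entrywise, and `1 - Q` has a nonnegative left
inverse `N`, then `1 - P` is invertible with nonnegative inverse. -/
lemma m_matrix_interval (Q P N : Matrix (Fin n) (Fin n) ℝ)
    (hQ : ∀ i j, 0 ≤ Q i j) (hP0 : ∀ i j, 0 ≤ P i j) (hPQ : ∀ i j, P i j ≤ Q i j)
    (hN : ∀ i j, 0 ≤ N i j) (h2 : N * (1 - Q) = 1) :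
    IsUnit (1 - P).det ∧ ∀ i j, 0 ≤ (1 - P)⁻¹ i j := by
  -- partial sums of powers of Q are bounded by N
  have hgeom : ∀ m : ℕ, (∑ k ∈ range m, Q ^ k) = N - N * Q ^ m := by
    intro m
    have h1 : (1 - Q) * ∑ k ∈ range m, Q ^ k = 1 - Q ^ m := by
      have := mul_geom_sum Q m
      have : ((Q - 1) * ∑ k ∈ range m, Q ^ k) = Q ^ m - 1 := this
      calc (1 - Q) * ∑ k ∈ range m, Q ^ k
          = -((Q - 1) * ∑ k ∈ range m, Q ^ k) := by rw [← neg_sub Q 1, neg_mul]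
        _ = -(Q ^ m - 1) := by rw [this]
        _ = 1 - Q ^ m := neg_sub _ _
    calc (∑ k ∈ range m, Q ^ k) = 1 * ∑ k ∈ range m, Q ^ k := (one_mul _).symm
      _ = (N * (1 - Q)) * ∑ k ∈ range m, Q ^ k := by rw [h2]
      _ = N * ((1 - Q) * ∑ k ∈ range m, Q ^ k) := by rw [mul_assoc]
      _ = N * (1 - Q ^ m) := by rw [h1]
      _ = N - N * Q ^ m := by rw [mul_sub, mul_one]
  have hbound : ∀ m : ℕ, ∀ i j, (∑ k ∈ range m, (P ^ k) i j) ≤ N i j := by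
    intro m i j
    have h1 : (∑ k ∈ range m, (P ^ k) i j) ≤ ∑ k ∈ range m, (Q ^ k) i j :=
      Finset.sum_le_sum fun k _ => pow_entry_le hP0 hPQ k i j
    have h2' : (∑ k ∈ range m, (Q ^ k) i j) = N i j - (N * Q ^ m) i j := by
      have := congrArg (fun M : Matrix (Fin n) (Fin n) ℝ => M i j) (hgeom m)
      simpa [Matrix.sum_apply, Matrix.sub_apply] using this
    have h3 : 0 ≤ (N * Q ^ m) i j := mul_entry_nonneg hN (pow_entry_nonneg hQ m) i j
    linarith
  have hsum : ∀ i j, Summable (fun k => (P ^ k) i j) := fun i j =>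
    summable_of_sum_range_le (fun k => pow_entry_nonneg hP0 k i j) (fun m => hbound m i j)
  set M : Matrix (Fin n) (Fin n) ℝ := fun i j => ∑' k, (P ^ k) i j with hM
  have hMnn : ∀ i j, 0 ≤ M i j := fun i j =>
    tsum_nonneg fun k => pow_entry_nonneg hP0 k i j
  -- telescoping: entrywise, ∑' k ((P^k - P^(k+1)) i j) = (P^0) i j
  have htel : ∀ i j, (∑' k : ℕ, ((P ^ k) i j - (P ^ (k + 1)) i j)) = (1 : Matrix (Fin n) (Fin n) ℝ) i j := by
    intro i j
    have hs1 := hsum i j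
    have hs2 : Summable fun k => (P ^ (k + 1)) i j := (summable_nat_add_iff (f := fun k => (P ^ k) i j) 1).2 hs1
    rw [Summable.tsum_sub hs1 hs2]
    have h0 := Summable.tsum_eq_zero_add hs1
    have : (∑' k : ℕ, (P ^ (k + 1)) i j) = (∑' k, (P ^ k) i j) - (P ^ 0) i j := by
      rw [h0]; ring
    rw [this]
    simp
  have hright : (1 - P) * M = 1 := by
    ext i j
    rw [Matrix.mul_apply]
    have step : ∀ x, (1 - P) i x * M x j = ∑' k, (1 - P) i x * (P ^ k) x j := by
      intro x; rw [hM]; exact (tsum_mul_left).symm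
    calc (∑ x, (1 - P) i x * M x j)
        = ∑ x, ∑' k, (1 - P) i x * (P ^ k) x j := Finset.sum_congr rfl fun x _ => step x
      _ = ∑' k, ∑ x, (1 - P) i x * (P ^ k) x j :=
          (Summable.tsum_finsetSum fun x _ => (hsum x j).mul_left _).symm
      _ = ∑' k, (((1 - P) * P ^ k : Matrix (Fin n) (Fin n) ℝ)) i j := by
          refine tsum_congr fun k => ?_
          rw [Matrix.mul_apply]
      _ = ∑' k : ℕ, ((P ^ k) i j - (P ^ (k + 1)) i j) := by
          refine tsum_congr fun k => ?_
          have : (1 - P) * P ^ k = P ^ k - P ^ (k + 1) := by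
            rw [sub_mul, one_mul, ← pow_succ']
          rw [this, Matrix.sub_apply]
      _ = (1 : Matrix (Fin n) (Fin n) ℝ) i j := htel i j
  have hdet : IsUnit (1 - P).det := by
    have := congrArg Matrix.det hright
    rw [Matrix.det_mul, Matrix.det_one] at this
    exact IsUnit.of_mul_eq_one _ this
  have hinv : (1 - P)⁻¹ = M := Matrix.inv_eq_right_inv hright
  exact ⟨hdet, by rw [hinv]; exact hMnn⟩

/-- Kuttler's theorem: if `L ≤ A ≤ U` entrywise and `L`, `U` are inverse nonnegative,
then so is `A`. -/
lemma kuttler (L A U : Matrix (Fin n) (Fin n) ℝ)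
    (hLA : ∀ i j, L i j ≤ A i j) (hAU : ∀ i j, A i j ≤ U i j)
    (hL : InvNonneg L) (hU : InvNonneg U) : InvNonneg A := by
  obtain ⟨hLd, hLinv⟩ := hL
  obtain ⟨hUd, hUinv⟩ := hU
  have hUU : U⁻¹ * U = 1 := Matrix.nonsing_inv_mul U hUd
  have hUU' : U * U⁻¹ = 1 := Matrix.mul_nonsing_inv U hUd
  have hLL : L⁻¹ * L = 1 := Matrix.nonsing_inv_mul L hLd
  have hLL' : L * L⁻¹ = 1 := Matrix.mul_nonsing_inv L hLd
  set Q : Matrix (Fin n) (Fin n) ℝ := 1 - U⁻¹ * L with hQdef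
  set P : Matrix (Fin n) (Fin n) ℝ := 1 - U⁻¹ * A with hPdef
  set N : Matrix (Fin n) (Fin n) ℝ := L⁻¹ * U with hNdef
  have sub_nonneg' : ∀ (X Y : Matrix (Fin n) (Fin n) ℝ), (∀ i j, X i j ≤ Y i j) →
      ∀ i j, 0 ≤ (Y - X) i j := by
    intro X Y h i j
    rw [Matrix.sub_apply]
    linarith [h i j]
  have hQnn : ∀ i j, 0 ≤ Q i j := by
    have : Q = U⁻¹ * (U - L) := by rw [hQdef, mul_sub, hUU]
    rw [this]
    exact mul_entry_nonneg hUinv (sub_nonneg' L U fun i j => le_trans (hLA i j) (hAU i j))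
  have hPnn : ∀ i j, 0 ≤ P i j := by
    have : P = U⁻¹ * (U - A) := by rw [hPdef, mul_sub, hUU]
    rw [this]
    exact mul_entry_nonneg hUinv (sub_nonneg' A U hAU)
  have hPQ : ∀ i j, P i j ≤ Q i j := by
    have h : Q - P = U⁻¹ * (A - L) := by
      rw [hQdef, hPdef, mul_sub]; abel
    intro i j
    have := mul_entry_nonneg hUinv (sub_nonneg' L A hLA) i j
    rw [← h, Matrix.sub_apply] at this
    linarith
  have hNnn : ∀ i j, 0 ≤ N i j := by
    have h : N = 1 + L⁻¹ * (U - L) := by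
      rw [hNdef, mul_sub, hLL]; abel
    intro i j
    rw [h, Matrix.add_apply]
    have h1 : 0 ≤ (1 : Matrix (Fin n) (Fin n) ℝ) i j := by
      rcases eq_or_ne i j with hij | hij <;> simp [Matrix.one_apply, hij]
    have h2 := mul_entry_nonneg hLinv
      (sub_nonneg' L U fun i j => le_trans (hLA i j) (hAU i j)) i j
    linarith
  have hN2 : N * (1 - Q) = 1 := by
    rw [hNdef, hQdef]
    have : (1 : Matrix (Fin n) (Fin n) ℝ) - (1 - U⁻¹ * L) = U⁻¹ * L := sub_sub_cancel _ _
    rw [this, mul_assoc, ← mul_assoc U, hUU', one_mul, hLL]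
  obtain ⟨hdet, hinvnn⟩ := m_matrix_interval Q P N hQnn hPnn hPQ hNnn hN2
  have h1P : (1 : Matrix (Fin n) (Fin n) ℝ) - P = U⁻¹ * A := by rw [hPdef]; exact sub_sub_cancel _ _
  rw [h1P] at hdet hinvnn
  have hAeq : A = U * (U⁻¹ * A) := by rw [← mul_assoc, hUU', one_mul]
  constructor
  · rw [hAeq, Matrix.det_mul]
    exact hUd.mul hdet
  · have : A⁻¹ = (U⁻¹ * A)⁻¹ * U⁻¹ := by
      conv_lhs => rw [hAeq]
      rw [Matrix.mul_inv_rev]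
    rw [this]
    exact mul_entry_nonneg hinvnn hUinv

end KuttlerAux

/-- If some `A^∃ ∈ 𝐀^∃` makes both `A̲^∀ + A^∃` and `Ā^∀ + A^∃` inverse
nonnegative, then `A^∀ + A^∃` is inverse nonnegative for every `A^∀ ∈ 𝐀^∀`; in particular
`𝐀` is AE inverse nonnegative with a single uniform existential choice. -/
theorem uniform_aeInvNonneg {n : ℕ} (LA UA LE UE : Matrix (Fin n) (Fin n) ℝ)
    (Ae : Matrix (Fin n) (Fin n) ℝ)
    (hAe : ∀ i j, LE i j ≤ Ae i j ∧ Ae i j ≤ UE i j)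
    (hlo : InvNonneg (LA + Ae)) (hhi : InvNonneg (UA + Ae)) :
    (∀ Af : Matrix (Fin n) (Fin n) ℝ,
        (∀ i j, LA i j ≤ Af i j ∧ Af i j ≤ UA i j) → InvNonneg (Af + Ae)) ∧
    (∀ Af : Matrix (Fin n) (Fin n) ℝ,
        (∀ i j, LA i j ≤ Af i j ∧ Af i j ≤ UA i j) →
        ∃ Ae' : Matrix (Fin n) (Fin n) ℝ,
          (∀ i j, LE i j ≤ Ae' i j ∧ Ae' i j ≤ UE i j) ∧ InvNonneg (Af + Ae')) := by
  have main : ∀ Af : Matrix (Fin n) (Fin n) ℝ,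
      (∀ i j, LA i j ≤ Af i j ∧ Af i j ≤ UA i j) → InvNonneg (Af + Ae) := by
    intro Af hAf
    refine KuttlerAux.kuttler (LA + Ae) (Af + Ae) (UA + Ae) ?_ ?_ hlo hhi
    · intro i j
      have := (hAf i j).1
      simp only [Matrix.add_apply]
      linarith
    · intro i j
      have := (hAf i j).2
      simp only [Matrix.add_apply]
      linarith
  exact ⟨main, fun Af hAf => ⟨Ae, hAe, main Af hAf⟩⟩
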